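/- For q ≥ 2 and w ≥ 0, the function r_w(x) = φ_w(x)/x, where φ_w(x) = sgn(x+w)|x+w|^q + sgn(x-w)|x-w|^q (with r_w(0) defined as the limit at 0), is an even function on ℝ which is nondecreasing and convex on (0, ∞). -/

import Mathlib

open Real Filter

lemma sign_mul_abs' (s : ℝ) : Real.sign s * |s| = s := by
  rcases lt_trichotomy s 0 with h | h | h
  · rw [Real.sign_of_neg h, abs_of_neg h]; ring
  · simp [h]
  · rw [Real.sign_of_pos h, abs_of_pos h, one_mul]

lemma psi_deriv (q : ℝ) (hq : 1 < q) (t : ℝ) :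
    HasDerivAt (fun s : ℝ => Real.sign s * |s| ^ q) (q * |t| ^ (q - 1)) t := by
  rcases lt_trichotomy t 0 with ht | ht | ht
  · have h1 : HasDerivAt (fun y : ℝ => y ^ q) (q * (-t) ^ (q - 1)) (-t) :=
      Real.hasDerivAt_rpow_const (Or.inl (by linarith))
    have h2 : HasDerivAt (fun s : ℝ => (-s) ^ q) (q * (-t) ^ (q - 1) * (-1)) t :=
      h1.comp t (hasDerivAt_neg t)
    have h3 : HasDerivAt (fun s : ℝ => -((-s) ^ q)) (q * |t| ^ (q - 1)) t := by
      have h4 := h2.neg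
      rw [abs_of_neg ht]; exact h4.congr_deriv (by ring)
    refine h3.congr_of_eventuallyEq ?_
    filter_upwards [eventually_lt_nhds ht] with s hs
    rw [Real.sign_of_neg hs, abs_of_neg hs]; ring
  · subst ht
    rw [hasDerivAt_iff_tendsto_slope]
    have htend : Tendsto (fun s : ℝ => |s| ^ (q - 1)) (nhdsWithin 0 {(0:ℝ)}ᶜ) (nhds 0) := by
      have hc : ContinuousAt (fun s : ℝ => |s| ^ (q - 1)) 0 :=
        (Real.continuousAt_rpow_const _ _ (Or.inr (by linarith))).comp continuous_abs.continuousAt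
      have := hc.tendsto.mono_left (nhdsWithin_le_nhds (s := {(0:ℝ)}ᶜ))
      simpa [Real.zero_rpow (by linarith : q - 1 ≠ 0)] using this
    have h0 : q * |(0:ℝ)| ^ (q - 1) = 0 := by
      simp [Real.zero_rpow (by linarith : q - 1 ≠ 0)]
    rw [h0]
    refine htend.congr' ?_
    filter_upwards [self_mem_nhdsWithin] with s hs
    have hs' : (s : ℝ) ≠ 0 := hs
    have habs : |s| ^ q = |s| * |s| ^ (q - 1) := by
      rw [← Real.rpow_one_add' (abs_nonneg s) (by linarith)]
      ring_nf
    rw [slope_def_field, Real.sign_zero, zero_mul, sub_zero, sub_zero, habs, ← mul_assoc, sign_mul_abs']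
    exact (mul_div_cancel_left₀ _ hs').symm
  · have h1 : HasDerivAt (fun y : ℝ => y ^ q) (q * t ^ (q - 1)) t :=
      Real.hasDerivAt_rpow_const (Or.inl (ne_of_gt ht))
    have h3 : HasDerivAt (fun y : ℝ => y ^ q) (q * |t| ^ (q - 1)) t := by
      rwa [abs_of_pos ht]
    refine h3.congr_of_eventuallyEq ?_
    filter_upwards [eventually_gt_nhds ht] with s hs
    rw [Real.sign_of_pos hs, abs_of_pos hs, one_mul]

lemma convex_abs_rpow (p c : ℝ) (hp : 1 ≤ p) :
    ConvexOn ℝ Set.univ (fun s : ℝ => |s + c| ^ p) := by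
  have h := convexOn_rpow hp
  refine ⟨convex_univ, fun x _ y _ a b ha hb hab => ?_⟩
  simp only [smul_eq_mul]
  have e1 : a * x + b * y + c = a * (x + c) + b * (y + c) := by linear_combination (-c) * hab
  calc |a * x + b * y + c| ^ p = |a * (x + c) + b * (y + c)| ^ p := by rw [e1]
    _ ≤ (a * |x + c| + b * |y + c|) ^ p := by
        apply Real.rpow_le_rpow (abs_nonneg _) _ (by linarith)
        calc |a * (x + c) + b * (y + c)| ≤ |a * (x + c)| + |b * (y + c)| := abs_add_le _ _
          _ = a * |x + c| + b * |y + c| := by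
              rw [abs_mul, abs_mul, abs_of_nonneg ha, abs_of_nonneg hb]
    _ ≤ a * |x + c| ^ p + b * |y + c| ^ p := by
        have := h.2 (Set.mem_Ici.mpr (abs_nonneg (x + c))) (Set.mem_Ici.mpr (abs_nonneg (y + c))) ha hb hab
        simpa [smul_eq_mul] using this

lemma even_convex_mono {f : ℝ → ℝ} (hf : ConvexOn ℝ Set.univ f) (he : ∀ s, f (-s) = f s)
    {a b : ℝ} (ha : 0 ≤ a) (hab : a ≤ b) : f a ≤ f b := by
  rcases eq_or_lt_of_le (ha.trans hab) with hb | hb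
  · have h0 : a = 0 := le_antisymm (hab.trans hb.symm.le) ha
    rw [h0, ← hb]
  · have hu : 0 ≤ (b + a) / (2 * b) := by positivity
    have hv : 0 ≤ (b - a) / (2 * b) := div_nonneg (by linarith) (by linarith)
    have huv : (b + a) / (2 * b) + (b - a) / (2 * b) = 1 := by
      rw [← add_div, show b + a + (b - a) = 2 * b by ring]
      exact div_self (by linarith)
    have hpt : ((b + a) / (2 * b)) * b + ((b - a) / (2 * b)) * (-b) = a := by
      field_simp
      ring
    have hle := hf.2 (Set.mem_univ b) (Set.mem_univ (-b)) hu hv huv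
    simp only [smul_eq_mul] at hle
    rw [hpt, he b, ← add_mul, huv, one_mul] at hle
    exact hle

theorem stmt_1 (q w : ℝ) (hq : 2 ≤ q) (hw : 0 ≤ w)
    (φ r : ℝ → ℝ)
    (hφ : ∀ x : ℝ, φ x = Real.sign (x + w) * |x + w| ^ q + Real.sign (x - w) * |x - w| ^ q)
    (hr : ∀ x : ℝ, x ≠ 0 → r x = φ x / x)
    (hr0 : ContinuousAt r 0) :
    (∀ x : ℝ, r (-x) = r x) ∧ MonotoneOn r (Set.Ioi 0) ∧ ConvexOn ℝ (Set.Ioi 0) r := by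
  have hq1 : (1:ℝ) < q := by linarith
  have hp : (1:ℝ) ≤ q - 1 := by linarith
  have hqpos : (0:ℝ) ≤ q := by linarith
  set g : ℝ → ℝ := fun s => |s + w| ^ (q-1) + |s - w| ^ (q-1) with hg_def
  have hgconv : ConvexOn ℝ Set.univ g := by
    have h1 := convex_abs_rpow (q-1) w hp
    have h2 := convex_abs_rpow (q-1) (-w) hp
    exact (h1.add h2).congr (fun s _ => by simp [hg_def, sub_eq_add_neg])
  have hgeven : ∀ s, g (-s) = g s := by
    intro s
    simp only [hg_def]
    rw [show -s + w = -(s - w) by ring, show -s - w = -(s + w) by ring, abs_neg, abs_neg]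
    ring
  have hgcont : Continuous g := by
    apply Continuous.add
    · exact ((continuous_id.add continuous_const).abs).rpow_const (fun x => Or.inr (by linarith))
    · exact ((continuous_id.sub continuous_const).abs).rpow_const (fun x => Or.inr (by linarith))
  have hgmono : ∀ a b : ℝ, 0 ≤ a → a ≤ b → g a ≤ g b :=
    fun a b ha hab => even_convex_mono hgconv hgeven ha hab
  have hF : ∀ s : ℝ, HasDerivAt
      (fun x => Real.sign (x + w) * |x + w| ^ q + Real.sign (x - w) * |x - w| ^ q) (q * g s) s := by
    intro s
    have h1 : HasDerivAt (fun x : ℝ => Real.sign (x + w) * |x + w| ^ q) (q * |s + w| ^ (q-1)) s := by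
      have := (psi_deriv q hq1 (s + w)).comp s ((hasDerivAt_id s).add_const w)
      simpa [Function.comp_def] using this
    have h2 : HasDerivAt (fun x : ℝ => Real.sign (x - w) * |x - w| ^ q) (q * |s - w| ^ (q-1)) s := by
      have := (psi_deriv q hq1 (s - w)).comp s ((hasDerivAt_id s).sub_const w)
      simpa [Function.comp_def] using this
    have h3 := h1.add h2
    exact h3.congr_deriv (by simp only [hg_def]; ring)
  have hFTC : ∀ x : ℝ, φ x = ∫ s in (0:ℝ)..x, q * g s := by
    intro x
    have hint : IntervalIntegrable (fun s => q * g s) MeasureTheory.volume 0 x :=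
      (continuous_const.mul hgcont).intervalIntegrable _ _
    have heq := intervalIntegral.integral_eq_sub_of_hasDerivAt (fun s _ => hF s) hint
    rw [hφ x, heq]
    simp only [zero_add, zero_sub, Real.sign_neg, abs_neg]
    try ring
  have hrep : ∀ x : ℝ, 0 < x → r x = q * ∫ u in (0:ℝ)..1, g (x * u) := by
    intro x hx
    rw [hr x hx.ne', hFTC x, intervalIntegral.integral_comp_mul_left g hx.ne',
      mul_zero, mul_one, smul_eq_mul, intervalIntegral.integral_const_mul]
    field_simp
    try ring
  have hI : ∀ x : ℝ, IntervalIntegrable (fun u => g (x * u)) MeasureTheory.volume 0 1 :=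
    fun x => (hgcont.comp (continuous_const.mul continuous_id)).intervalIntegrable _ _
  refine ⟨?_, ?_, ?_⟩
  · intro x
    rcases eq_or_ne x 0 with h | h
    · rw [h, neg_zero]
    · rw [hr _ (neg_ne_zero.mpr h), hr x h]
      have hφodd : φ (-x) = -φ x := by
        rw [hφ, hφ, show -x + w = -(x - w) by ring, show -x - w = -(x + w) by ring,
          Real.sign_neg, Real.sign_neg, abs_neg, abs_neg]
        ring
      rw [hφodd, neg_div_neg_eq]
  · intro x hx y hy hxy
    rw [hrep x hx, hrep y hy]
    apply mul_le_mul_of_nonneg_left _ hqpos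
    apply intervalIntegral.integral_mono_on zero_le_one (hI x) (hI y)
    intro u hu
    exact hgmono _ _ (mul_nonneg (le_of_lt hx) hu.1) (mul_le_mul_of_nonneg_right hxy hu.1)
  · refine ⟨convex_Ioi 0, fun x hx y hy a b ha hb hab => ?_⟩
    have hxy : a • x + b • y ∈ Set.Ioi 0 := (convex_Ioi 0) hx hy ha hb hab
    simp only [smul_eq_mul] at hxy ⊢
    rw [hrep _ (Set.mem_Ioi.mp hxy), hrep x hx, hrep y hy]
    have key : (∫ u in (0:ℝ)..1, g ((a*x + b*y) * u))
        ≤ ∫ u in (0:ℝ)..1, (a * g (x*u) + b * g (y*u)) := by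
      apply intervalIntegral.integral_mono_on zero_le_one (hI _)
        (((hI x).const_mul a).add ((hI y).const_mul b))
      intro u hu
      have hcv := hgconv.2 (Set.mem_univ (x*u)) (Set.mem_univ (y*u)) ha hb hab
      simp only [smul_eq_mul] at hcv
      have e : (a*x + b*y) * u = a * (x*u) + b * (y*u) := by ring
      rw [e]
      exact hcv
    rw [intervalIntegral.integral_add ((hI x).const_mul a) ((hI y).const_mul b),
      intervalIntegral.integral_const_mul, intervalIntegral.integral_const_mul] at key
    calc q * ∫ u in (0:ℝ)..1, g ((a*x + b*y) * u)
        ≤ q * (a * (∫ u in (0:ℝ)..1, g (x*u)) + b * ∫ u in (0:ℝ)..1, g (y*u)) :=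
          mul_le_mul_of_nonneg_left key hqpos
      _ = a * (q * ∫ u in (0:ℝ)..1, g (x*u)) + b * (q * ∫ u in (0:ℝ)..1, g (y*u)) := by ring
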